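/- Let Q be a finite type with N elements, with interpretations â : Q^s → Q for each symbol a of arity s of a ranked alphabet Σ, and let R ⊆ Q be the least set closed under all the â. Then every q ∈ R admits a derivation sequence q₁, …, q_m of pairwise distinct elements of R with q_m = q and with each q_i obtained by applying some â to earlier elements of the sequence; in particular m ≤ N, and hence there is a term t with eval(t) = q and height(t) ≤ N − 1. -/

import Mathlib

/-- Terms over a ranked alphabet `σ` with arity function `ar`. -/
inductive RTerm (σ : Type*) (ar : σ → ℕ) : Type _
  | node (a : σ) (children : Fin (ar a) → RTerm σ ar) : RTerm σ ar

/-- Bottom-up evaluation of a term, given an interpretation of each symbol. -/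
def RTerm.eval {σ : Type*} {ar : σ → ℕ} {Q : Type*}
    (interp : (a : σ) → (Fin (ar a) → Q) → Q) : RTerm σ ar → Q
  | node a c => interp a fun i => (c i).eval interp

/-- The height of a term: the number of edges on a longest root-to-leaf path. -/
def RTerm.height {σ : Type*} {ar : σ → ℕ} : RTerm σ ar → ℕ
  | node _ c => Finset.univ.sup fun i => (c i).height + 1

/-- A set `S ⊆ Q` is closed under the interpretations of the symbols. -/
def SymClosed {σ : Type*} {ar : σ → ℕ} {Q : Type*}
    (interp : (a : σ) → (Fin (ar a) → Q) → Q) (S : Set Q) : Prop :=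
  ∀ (a : σ) (q : Fin (ar a) → Q), (∀ i, q i ∈ S) → interp a q ∈ S


section Aux
variable {σ : Type*} {ar : σ → ℕ} {Q : Type*}
  (interp : (a : σ) → (Fin (ar a) → Q) → Q) (R : Set Q)

/-- A "good" list: nodup, elements in R, each element obtained from earlier ones. -/
def GoodList (L : List Q) : Prop :=
  L.Nodup ∧ (∀ x ∈ L, x ∈ R) ∧
  ∀ i, (h : i < L.length) → ∃ a, ∃ j : Fin (ar a) → Fin i,
    L[i] = interp a fun l => L[(j l : ℕ)]'((j l).isLt.trans h)

theorem goodList_nil : GoodList interp R [] :=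
  ⟨List.nodup_nil, by simp, fun i h => absurd h (by simp)⟩

theorem goodList_extend {L : List Q} (hL : GoodList interp R L)
    (hclosed : SymClosed interp R)
    (a : σ) (q : Fin (ar a) → Q) (hq : ∀ l, q l ∈ L)
    (hnot : interp a q ∉ L) : GoodList interp R (L ++ [interp a q]) := by
  obtain ⟨hnd, hR, hder⟩ := hL
  refine ⟨?_, ?_, ?_⟩
  · simp [List.nodup_append, hnd, hnot]
    intro x hx hx'
    exact hnot (hx' ▸ hx)
  · intro x hx
    rcases List.mem_append.1 hx with h | h
    · exact hR x h
    · simp at h; subst h; exact hclosed a q fun l => hR _ (hq l)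
  · intro i h
    have hlen : (L ++ [interp a q]).length = L.length + 1 := by simp
    rcases lt_or_eq_of_le (Nat.lt_succ_iff.mp (hlen ▸ h)) with hi | hi
    · obtain ⟨a', j, hj⟩ := hder i hi
      refine ⟨a', j, ?_⟩
      rw [List.getElem_append_left hi]
      rw [hj]
      congr 1
      funext l
      rw [List.getElem_append_left ((j l).isLt.trans hi)]
    · subst hi
      choose f hf using fun l => List.mem_iff_getElem.1 (hq l)
      refine ⟨a, fun l => ⟨f l, (hf l).1⟩, ?_⟩
      have : (L ++ [interp a q])[L.length]'h = interp a q := by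
        simp
      rw [this]
      congr 1
      funext l
      rw [List.getElem_append_left (hf l).1]
      exact ((hf l).2).symm

theorem goodList_take {L : List Q} (hL : GoodList interp R L) (n : ℕ) :
    GoodList interp R (L.take n) := by
  obtain ⟨hnd, hR, hder⟩ := hL
  refine ⟨hnd.sublist (List.take_sublist n L), fun x hx => hR x (List.mem_of_mem_take hx), ?_⟩
  intro i h
  have hi : i < L.length := h.trans_le (by simp)
  obtain ⟨a, j, hj⟩ := hder i hi
  refine ⟨a, j, ?_⟩
  rw [List.getElem_take, hj]
  congr 1
  funext l
  rw [List.getElem_take]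

end Aux

theorem reachable_has_short_derivation {σ : Type*} {ar : σ → ℕ}
    {Q : Type*} [Fintype Q]
    (interp : (a : σ) → (Fin (ar a) → Q) → Q) (R : Set Q)
    (hclosed : SymClosed interp R)
    (hleast : ∀ S : Set Q, SymClosed interp S → R ⊆ S) :
    ∀ q ∈ R,
      (∃ (m : ℕ), 0 < m ∧ m ≤ Fintype.card Q ∧
        ∃ qs : Fin m → Q, Function.Injective qs ∧ (∀ i, qs i ∈ R) ∧
          (∀ i : Fin m, ∃ (a : σ) (j : Fin (ar a) → Fin m),
            (∀ l, (j l : ℕ) < (i : ℕ)) ∧ qs i = interp a fun l => qs (j l)) ∧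
          ∃ ilast : Fin m, (ilast : ℕ) = m - 1 ∧ qs ilast = q) ∧
      ∃ t : RTerm σ ar, t.eval interp = q ∧ t.height ≤ Fintype.card Q - 1 := by
  classical
  -- good lists have length ≤ card Q
  have hlen_le : ∀ L : List Q, GoodList interp R L → L.length ≤ Fintype.card Q := by
    intro L hL
    exact hL.1.length_le_card
  -- maximal good list
  set P : ℕ → Prop := fun n => ∃ L : List Q, GoodList interp R L ∧ L.length = n with hP
  have h0 : P 0 := ⟨[], goodList_nil interp R, rfl⟩
  have hmax := Nat.findGreatest_spec (P := P) (Nat.zero_le (Fintype.card Q)) h0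
  obtain ⟨L, hL, hLlen⟩ := hmax
  -- the set of elements of L is SymClosed
  have hSclosed : SymClosed interp {x | x ∈ L} := by
    intro a q hq
    by_contra hnot
    have hext := goodList_extend interp R hL hclosed a q hq hnot
    have : P (L.length + 1) := ⟨_, hext, by simp⟩
    have hgt : Nat.findGreatest P (Fintype.card Q) < L.length + 1 := by
      rw [hLlen]; omega
    have hle : L.length + 1 ≤ Fintype.card Q := by simpa using hlen_le _ hext
    exact Nat.findGreatest_is_greatest hgt hle this
  have hsub : R ⊆ {x | x ∈ L} := hleast _ hSclosed
  intro q hqR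
  have hqL : q ∈ L := hsub hqR
  obtain ⟨k, hk, hkq⟩ := List.mem_iff_getElem.1 hqL
  -- take prefix of length k+1
  set L' := L.take (k + 1) with hL'
  have hgood' : GoodList interp R L' := goodList_take interp R hL (k + 1)
  have hlen' : L'.length = k + 1 := by
    simp [hL', Nat.succ_le_of_lt hk]
  set m := k + 1 with hm
  have hmle : m ≤ Fintype.card Q := hlen' ▸ hlen_le _ hgood'
  set qs : Fin m → Q := fun i => L'[(i : ℕ)]'(by omega) with hqs
  have hinj : Function.Injective qs := by
    intro i j hij
    exact Fin.ext ((List.Nodup.getElem_inj_iff hgood'.1 (hi := by omega) (hj := by omega)).1 hij)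
  have hmemR : ∀ i, qs i ∈ R := fun i => hgood'.2.1 _ (List.getElem_mem _)
  have hder : ∀ i : Fin m, ∃ (a : σ) (j : Fin (ar a) → Fin m),
      (∀ l, (j l : ℕ) < (i : ℕ)) ∧ qs i = interp a fun l => qs (j l) := by
    intro i
    obtain ⟨a, j, hj⟩ := hgood'.2.2 (i : ℕ) (by omega)
    refine ⟨a, fun l => ⟨(j l : ℕ), by have := (j l).isLt; omega⟩, fun l => (j l).isLt, ?_⟩
    exact hj
  have hlast : qs ⟨k, by omega⟩ = q := by
    simp only [hqs]
    rw [List.getElem_take]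
    exact hkq
  refine ⟨⟨m, by omega, hmle, qs, hinj, hmemR, hder, ⟨k, by omega⟩, by simp [hm], hlast⟩, ?_⟩
  -- term construction
  have hterm : ∀ n : ℕ, ∀ i : Fin m, (i : ℕ) ≤ n →
      ∃ t : RTerm σ ar, t.eval interp = qs i ∧ t.height ≤ (i : ℕ) := by
    intro n
    induction n with
    | zero =>
      intro i hi
      obtain ⟨a, j, hjlt, heq⟩ := hder i
      have har : ar a = 0 := by
        by_contra h
        have := hjlt ⟨0, Nat.pos_of_ne_zero h⟩
        omega
      refine ⟨RTerm.node a (fun l => absurd l.isLt (by omega)), ?_, ?_⟩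
      · rw [RTerm.eval, heq]
        congr 1; funext l; exact absurd l.isLt (by omega)
      · rw [RTerm.height]
        have : (Finset.univ : Finset (Fin (ar a))) = ∅ := by
          rw [Finset.univ_eq_empty_iff]; exact ⟨fun l => absurd l.isLt (by omega)⟩
        simp [this]
    | succ n ih =>
      intro i hi
      obtain ⟨a, j, hjlt, heq⟩ := hder i
      have hsub : ∀ l, ((j l : Fin m) : ℕ) ≤ n := fun l => by have := hjlt l; omega
      choose t ht1 ht2 using fun l => ih (j l) (hsub l)
      refine ⟨RTerm.node a t, ?_, ?_⟩
      · rw [RTerm.eval, heq]; congr 1; funext l; exact ht1 l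
      · rw [RTerm.height]
        apply Finset.sup_le
        intro l _
        have := ht2 l
        have := hjlt l
        omega
  obtain ⟨t, ht1, ht2⟩ := hterm m ⟨k, by omega⟩ (by omega)
  exact ⟨t, ht1.trans hlast, by omega⟩
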